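/- Let η: ℝ → ℝ be differentiable and bounded with η'(θ) > 0 for all θ. Then there do not exist constants λ, a, b ∈ ℝ with η' = −(λ/2)η² + aη + b and discriminant a² + 2bλ < 0. -/

import Mathlib

theorem no_negative_discriminant_riccati (η : ℝ → ℝ)
    (hdiff : Differentiable ℝ η)
    (hbdd : ∃ M, ∀ θ, |η θ| ≤ M)
    (hpos : ∀ θ, 0 < deriv η θ) :
    ¬∃ (lam a b : ℝ),
      (∀ θ, deriv η θ = -(lam / 2) * η θ ^ 2 + a * η θ + b) ∧
        a ^ 2 + 2 * b * lam < 0 := by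
  rintro ⟨lam, a, b, heq, hdisc⟩
  obtain ⟨M, hM⟩ := hbdd
  set f : ℝ → ℝ := fun x => -(lam / 2) * x ^ 2 + a * x + b with hf
  have hlam : -(lam / 2) ≠ 0 := by
    intro h
    have : lam = 0 := by linarith [neg_eq_zero.mp h]
    rw [this] at hdisc
    nlinarith [sq_nonneg a]
  -- f has no roots
  have hroot : ∀ x, f x ≠ 0 := by
    intro x hx
    have h0 : -(lam / 2) * (x * x) + a * x + b = 0 := by
      simp only [hf] at hx; nlinarith [hx]
    have := discrim_eq_sq_of_quadratic_eq_zero h0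
    rw [discrim] at this
    nlinarith [sq_nonneg (2 * -(lam / 2) * x + a)]
  -- f is continuous
  have hfc : Continuous f := by fun_prop
  -- f (η θ) > 0 for all θ
  have hfpos : ∀ θ, 0 < f (η θ) := fun θ => by show 0 < -(lam / 2) * η θ ^ 2 + a * η θ + b; rw [← heq θ]; exact hpos θ
  -- f > 0 everywhere by IVT
  have hfpos' : ∀ x, 0 < f x := by
    intro x
    rcases lt_trichotomy (f x) 0 with h | h | h
    · exfalso
      have : (0 : ℝ) ∈ Set.uIcc (f x) (f (η 0)) :=
        Set.mem_uIcc.2 (Or.inl ⟨le_of_lt h, le_of_lt (hfpos 0)⟩)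
      obtain ⟨c, _, hc⟩ := intermediate_value_uIcc (hfc.continuousOn (s := Set.uIcc x (η 0))) this
      exact hroot c hc
    · exact absurd h (hroot x)
    · exact h
  -- epsilon: minimum of f on [-M, M]
  have hM0 : 0 ≤ M := le_trans (abs_nonneg _) (hM 0)
  obtain ⟨x₀, hx₀mem, hx₀⟩ := (isCompact_Icc (a := -M) (b := M)).exists_isMinOn
    (Set.nonempty_Icc.2 (by linarith)) (hfc.continuousOn)
  set ε := f x₀ with hε
  have hεpos : 0 < ε := hfpos' x₀
  have hderiv_ge : ∀ θ, ε ≤ deriv η θ := by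
    intro θ
    rw [heq θ]
    exact hx₀ (Set.mem_Icc.2 (abs_le.mp (hM θ)))
  -- growth
  have hgrow : ∀ θ : ℝ, 0 ≤ θ → ε * θ ≤ η θ - η 0 := by
    intro θ hθ
    have := mul_sub_le_image_sub_of_le_deriv hdiff hderiv_ge (x := 0) (y := θ) hθ
    simpa using this
  -- contradiction: take θ large
  set T := (2 * M + 1 - η 0) / ε with hT
  have hT0 : 0 ≤ T := by
    apply div_nonneg _ (le_of_lt hεpos)
    have := abs_le.mp (hM 0)
    linarith [this.1]
  have := hgrow T hT0
  have hεT : ε * T = 2 * M + 1 - η 0 := by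
    rw [hT]; field_simp [hεpos.ne']
  rw [hεT] at this
  have hb := abs_le.mp (hM T)
  linarith [hb.2]
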